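/- For every connected linear graph ℍ, the tree order relaxation rel(ℍ) embeds into ℍ, and every embedding of rel(ℍ) into ℍ fixes every vertex of the stem of rel(ℍ). -/
import Mathlib


/-- A tree-ordered graph (tog): a simple graph together with a partial order on its
vertices that is a tree order (sets of predecessors are linearly ordered) and that
guards the edge relation (endpoints of every edge are comparable). -/
structure Tog (V : Type) where
  G : SimpleGraph V
  le : V → V → Prop
  le_refl : ∀ v, le v v
  le_antisymm : ∀ u v, le u v → le v u → u = v
  le_trans : ∀ u v w, le u v → le v w → le u w
  tree : ∀ x y z, le y x → le z x → le y z ∨ le z y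
  guard : ∀ u v, G.Adj u v → le u v ∨ le v u

namespace Tog

variable {V W : Type}

/-- A linear graph is a tog whose order is total. -/
def IsLinear (H : Tog V) : Prop := ∀ u v, H.le u v ∨ H.le v u

/-- An embedding of a tog `H` into a tog `G`: an injective map preserving edges
and the order. -/
def IsEmbedding (H : Tog V) (G : Tog W) (φ : V → W) : Prop :=
  Function.Injective φ ∧ (∀ u v, H.G.Adj u v → G.G.Adj (φ u) (φ v)) ∧
    ∀ u v, H.le u v → G.le (φ u) (φ v)

/-- An embedding of the induced subtog `H[A]` into `G`, given as a map defined on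
all of `V` but constrained only on `A`.  -/
def IsEmbeddingOn (H : Tog V) (G : Tog W) (A : Set V) (φ : V → W) : Prop :=
  Set.InjOn φ A ∧ (∀ u ∈ A, ∀ v ∈ A, H.G.Adj u v → G.G.Adj (φ u) (φ v)) ∧
    ∀ u ∈ A, ∀ v ∈ A, H.le u v → G.le (φ u) (φ v)

/-- The stem of a tog: the set of vertices comparable with every vertex,
i.e. the maximal linearly ordered downward chain lying below all other vertices. -/
def stem (H : Tog V) : Set V := {u | ∀ v, H.le u v ∨ H.le v u}

/-- `s` is a stem prefix of `H`: a downward-closed subset of the stem. -/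
def IsStemPrefix (H : Tog V) (s : Set V) : Prop :=
  s ⊆ H.stem ∧ ∀ u ∈ H.stem, ∀ v ∈ s, H.le u v → u ∈ s

/-- Leaves of a tog: vertices maximal in the tree order. -/
def leaves (H : Tog V) : Set V := {u | ∀ v, H.le u v → v = u}

/-- The vertex set of the piece induced by a set `S` of leaves: the union of the
root paths of the members of `S`. -/
def pieceSet (H : Tog V) (S : Set V) : Set V := {y | ∃ x ∈ S, H.le y x}

/-- `H = H[A₁] ⊕ H[A₂]`: the vertex sets `A₁`, `A₂` are pieces of `H` induced by
nonempty leaf sets that partition the leaves of `H`. -/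
def PieceDecomp (H : Tog V) (A₁ A₂ : Set V) : Prop :=
  ∃ S₁ S₂ : Set V, S₁.Nonempty ∧ S₂.Nonempty ∧ Disjoint S₁ S₂ ∧
    S₁ ∪ S₂ = H.leaves ∧ A₁ = H.pieceSet S₁ ∧ A₂ = H.pieceSet S₂

/-- The induced subtog on a vertex set `A`. -/
def induce (H : Tog V) (A : Set V) : Tog A where
  G := H.G.induce A
  le u v := H.le u v
  le_refl v := H.le_refl v
  le_antisymm u v h1 h2 := Subtype.ext (H.le_antisymm _ _ h1 h2)
  le_trans u v w := H.le_trans _ _ _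
  tree x y z := H.tree _ _ _
  guard u v h := H.guard _ _ h

/-- The ancestor relation of the elimination tree of a (connected) linear graph `H`:
`u` is an ancestor of `v` iff there is a walk from `u` to `v` all of whose vertices
come after `u` in the linear order. -/
def relLe (H : Tog V) (u v : V) : Prop :=
  ∃ p : H.G.Walk u v, ∀ w ∈ p.support, H.le u w

/-- The tree order relaxation `rel(H)` of a linear graph `H`: the tog on the same
graph whose order is the ancestor relation of the elimination tree of `H`. -/
def relax (H : Tog V) (hlin : H.IsLinear) : Tog V where
  G := H.G
  le := H.relLe
  le_refl v := ⟨SimpleGraph.Walk.nil, by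
    intro w hw
    simp only [SimpleGraph.Walk.support_nil, List.mem_singleton] at hw
    subst hw; exact H.le_refl w⟩
  le_antisymm u v h1 h2 := by
    obtain ⟨p, hp⟩ := h1; obtain ⟨q, hq⟩ := h2
    exact H.le_antisymm u v (hp v p.end_mem_support) (hq u q.end_mem_support)
  le_trans u v w h1 h2 := by
    obtain ⟨p, hp⟩ := h1; obtain ⟨q, hq⟩ := h2
    refine ⟨p.append q, ?_⟩
    intro x hx
    rcases (SimpleGraph.Walk.mem_support_append_iff _ _).1 hx with h | h
    · exact hp x h
    · exact H.le_trans u v x (hp v p.end_mem_support) (hq x h)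
  tree x y z h1 h2 := by
    obtain ⟨p, hp⟩ := h1; obtain ⟨q, hq⟩ := h2
    rcases hlin y z with h | h
    · left
      refine ⟨p.append q.reverse, ?_⟩
      intro w hw
      rcases (SimpleGraph.Walk.mem_support_append_iff _ _).1 hw with hw | hw
      · exact hp w hw
      · rw [SimpleGraph.Walk.support_reverse, List.mem_reverse] at hw
        exact H.le_trans y z w h (hq w hw)
    · right
      refine ⟨q.append p.reverse, ?_⟩
      intro w hw
      rcases (SimpleGraph.Walk.mem_support_append_iff _ _).1 hw with hw | hw
      · exact hq w hw
      · rw [SimpleGraph.Walk.support_reverse, List.mem_reverse] at hw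
        exact H.le_trans z y w h (hp w hw)
  guard u v h := by
    rcases H.guard u v h with hle | hle
    · left
      refine ⟨SimpleGraph.Walk.cons h SimpleGraph.Walk.nil, ?_⟩
      intro w hw
      simp only [SimpleGraph.Walk.support_cons, SimpleGraph.Walk.support_nil,
        List.mem_cons, List.mem_singleton] at hw
      rcases hw with rfl | hw
      · exact H.le_refl w
      · rcases hw with rfl | hw
        · exact hle
        · simp at hw
    · right
      refine ⟨SimpleGraph.Walk.cons h.symm SimpleGraph.Walk.nil, ?_⟩
      intro w hw
      simp only [SimpleGraph.Walk.support_cons, SimpleGraph.Walk.support_nil,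
        List.mem_cons, List.mem_singleton] at hw
      rcases hw with rfl | hw
      · exact H.le_refl w
      · rcases hw with rfl | hw
        · exact hle
        · simp at hw

/-- A tog is an etog (elimination-ordered graph) if it is the tree order relaxation
of some linear graph. -/
def IsEtog (D : Tog V) : Prop := ∃ (L : Tog V) (hlin : L.IsLinear), D = L.relax hlin

/-- A pattern relaxation of a pattern graph `H₀`: the relaxation of some linear
ordering of `H₀`. -/
def IsPatternRelaxation (H₀ : SimpleGraph V) (HH : Tog V) : Prop :=
  ∃ (L : Tog V) (hlin : L.IsLinear), L.G = H₀ ∧ HH = L.relax hlin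

/-- Weakly `r`-reachable vertices from `u` in an ordered graph `G`. -/
def wreach (G : Tog W) (r : ℕ) (u : W) : Set W :=
  {v | ∃ p : G.G.Walk u v, p.IsPath ∧ p.length ≤ r ∧ ∀ w ∈ p.support, G.le v w}

/-- Strongly `r`-reachable vertices from `u` in an ordered graph `G`. -/
def sreach (G : Tog W) (r : ℕ) (u : W) : Set W :=
  {v | G.le v u ∧ ∃ p : G.G.Walk u v, p.IsPath ∧ p.length ≤ r ∧
    ∀ w ∈ p.support, w ≠ v → G.le u w}

/-- The embedding count `#_{x̄→ȳ}(H, G)`: the number of embeddings of `H` into `G`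
mapping the (ordered) set `xb` onto `yb`. -/
noncomputable def embCount (H : Tog V) (G : Tog W) (xb : Set V) (yb : Set W) : ℕ :=
  {φ : V → W | H.IsEmbedding G φ ∧ φ '' xb = yb}.ncard

/-- The embedding count of the piece `H[A]` into `G`. -/
noncomputable def pieceEmbCount (H : Tog V) (G : Tog W) (A : Set V)
    (xb : Set V) (yb : Set W) : ℕ :=
  {φ : A → W | (H.induce A).IsEmbedding G φ ∧ φ '' (Subtype.val ⁻¹' xb) = yb}.ncard

/-- The relaxed embedding count `#_{x̄→ȳ}(H, G | H₁, H₂)`: the number of maps whose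
restrictions to the pieces `H[A₁]` and `H[A₂]` are embeddings into `G` and which map
`xb` onto `yb`. -/
noncomputable def relEmbCount (H : Tog V) (G : Tog W) (A₁ A₂ : Set V)
    (xb : Set V) (yb : Set W) : ℕ :=
  {φ : V → W | H.IsEmbeddingOn G A₁ φ ∧ H.IsEmbeddingOn G A₂ φ ∧ φ '' xb = yb}.ncard

/-- A defect of the pieces `H[A₁]`, `H[A₂]` (decomposed along the stem prefix `xb`):
an etog `D` into which `H` does not embed, `H[A₁]` embeds via the identity, `H[A₂]`
embeds via a map `φ` that is the identity on `(A₂ \ A₁) ∪ xb`, and whose vertex set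
is `A₁ ∪ φ(A₂)`. -/
def IsDefect (H : Tog V) (A₁ A₂ xb : Set V) (D : Tog V) : Prop :=
  IsEtog D ∧
  (¬ ∃ ψ : V → V, H.IsEmbedding D ψ) ∧
  H.IsEmbeddingOn D A₁ id ∧
  ∃ φ : V → V, H.IsEmbeddingOn D A₂ φ ∧ (∀ v ∈ (A₂ \ A₁) ∪ xb, φ v = v) ∧
    A₁ ∪ φ '' A₂ = Set.univ

/-- Automorphism of a tog. -/
def IsAuto (H : Tog V) (φ : V → V) : Prop :=
  Function.Bijective φ ∧ (∀ u v, H.G.Adj u v ↔ H.G.Adj (φ u) (φ v)) ∧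
    ∀ u v, H.le u v ↔ H.le (φ u) (φ v)

/-- The induced subtogs `H[xb]` and `G[yb]` are isomorphic. -/
def IndIso (H : Tog V) (G : Tog W) (xb : Set V) (yb : Set W) : Prop :=
  ∃ f : V → W, Set.BijOn f xb yb ∧ ∀ u ∈ xb, ∀ v ∈ xb,
    (H.G.Adj u v ↔ G.G.Adj (f u) (f v)) ∧ (H.le u v ↔ G.le (f u) (f v))

end Tog


/-- the tree order relaxation of a connected linear graph embeds into
it, and every such embedding fixes the stem of the relaxation pointwise. -/
theorem relax_embeds_fixing_stem {V : Type} [Fintype V] (H : Tog V)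
    (hlin : H.IsLinear) (hconn : H.G.Connected) :
    (∃ φ : V → V, (H.relax hlin).IsEmbedding H φ) ∧
    ∀ φ : V → V, (H.relax hlin).IsEmbedding H φ →
      ∀ v ∈ (H.relax hlin).stem, φ v = v := by
  constructor
  · refine ⟨id, fun a b h => h, fun u v h => h, fun u v h => ?_⟩
    obtain ⟨p, hp⟩ := h
    exact hp v p.end_mem_support
  · rintro φ ⟨hinj, hadj, hle⟩ v hv
    have hstem : ∀ w, H.relLe v w ∨ H.relLe w v := hv
    -- relLe below/above v coincides with H.le below/above v
    have hA : ∀ w, H.le w v → H.relLe w v := by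
      intro w hw
      rcases hstem w with h | h
      · obtain ⟨p, hp⟩ := h
        have : v = w := H.le_antisymm v w (hp w p.end_mem_support) hw
        subst this; exact ⟨p, hp⟩
      · exact h
    have hB : ∀ w, H.le v w → H.relLe v w := by
      intro w hw
      rcases hstem w with h | h
      · exact h
      · obtain ⟨p, hp⟩ := h
        have : w = v := H.le_antisymm w v (hp v p.end_mem_support) hw
        subst this; exact ⟨p, hp⟩
    have hrel_le : ∀ u w, H.relLe u w → H.le u w := by
      intro u w h
      obtain ⟨p, hp⟩ := h
      exact hp w p.end_mem_support
    set d : V → Set V := fun x => {w | H.le w x} with hd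
    set u : V → Set V := fun x => {w | H.le x w} with hu
    have hfin : ∀ s : Set V, s.Finite := fun s => s.toFinite
    -- φ maps d v into d (φ v) and u v into u (φ v)
    have hmapd : Set.MapsTo φ (d v) (d (φ v)) := by
      intro w hw
      exact hle w v (hA w hw)
    have hmapu : Set.MapsTo φ (u v) (u (φ v)) := by
      intro w hw
      exact hle v w (hB w hw)
    have hcard_d : (d v).ncard ≤ (d (φ v)).ncard :=
      Set.ncard_le_ncard_of_injOn φ hmapd (hinj.injOn) (hfin _)
    have hcard_u : (u v).ncard ≤ (u (φ v)).ncard :=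
      Set.ncard_le_ncard_of_injOn φ hmapu (hinj.injOn) (hfin _)
    -- d x + u x is constant
    have hsum : ∀ x : V, (d x).ncard + (u x).ncard = Fintype.card V + 1 := by
      intro x
      have hunion : d x ∪ u x = Set.univ := by
        ext w
        simp only [Set.mem_union, Set.mem_setOf_eq, Set.mem_univ, iff_true, hd, hu]
        exact hlin w x
      have hinter : d x ∩ u x = {x} := by
        ext w
        simp only [Set.mem_inter_iff, Set.mem_setOf_eq, Set.mem_singleton_iff, hd, hu]
        constructor
        · rintro ⟨h1, h2⟩; exact H.le_antisymm w x h1 h2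
        · rintro rfl; exact ⟨H.le_refl w, H.le_refl w⟩
      have := Set.ncard_union_add_ncard_inter (d x) (u x) (hfin _) (hfin _)
      rw [hunion, hinter] at this
      simpa [Set.ncard_univ] using this.symm
    have hdeq : (d v).ncard = (d (φ v)).ncard := by
      have h1 := hsum v
      have h2 := hsum (φ v)
      omega
    have hueq : (u v).ncard = (u (φ v)).ncard := by
      have h1 := hsum v
      have h2 := hsum (φ v)
      omega
    rcases hlin v (φ v) with hc | hc
    · -- d v ⊆ d (φ v), equal cards ⇒ equal sets
      have hsub : d v ⊆ d (φ v) := fun w hw => H.le_trans w v (φ v) hw hc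
      have heq : d v = d (φ v) :=
        Set.eq_of_subset_of_ncard_le hsub (le_of_eq hdeq.symm) (hfin _)
      have : φ v ∈ d v := heq ▸ (H.le_refl (φ v) : φ v ∈ d (φ v))
      exact H.le_antisymm (φ v) v this hc |>.symm ▸ rfl
    · have hsub : u v ⊆ u (φ v) := fun w hw => H.le_trans (φ v) v w hc hw
      have heq : u v = u (φ v) :=
        Set.eq_of_subset_of_ncard_le hsub (le_of_eq hueq.symm) (hfin _)
      have : φ v ∈ u v := heq ▸ (H.le_refl (φ v) : φ v ∈ u (φ v))
      exact H.le_antisymm (φ v) v hc this |>.symm ▸ rfl
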